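/- arXiv:2205.09966 — 3 statements merged into one kernel-verified Lean document; each statement's English description precedes it below -/
import Mathlib

section
/- Let g be a C² function with g'(θ_g) = 0 satisfying the non-degeneracy condition |g'(u) - g'(v)| ≥ C₂|u - v|^q for all u, v in a compact set, with q ≥ 1 and C₂ > 0. Then for all x > y ≥ θ_g, |g(x) - g(y)| ≥ (C₂/(q+1)) |x - y|^{q+1}. -/
/-- If `g` is `C²` with `g'(θ_g) = 0` and satisfies the non-degeneracy
condition `|g'(u) - g'(v)| ≥ C₂|u - v|^q` on the relevant compact set, then for all
`x > y ≥ θ_g`, `|g(x) - g(y)| ≥ (C₂/(q+1)) |x - y|^(q+1)`. -/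
theorem flux_nondegeneracy_integrated
    (g : ℝ → ℝ) (hg : ContDiff ℝ 2 g) (θg : ℝ)
    (hθ : deriv g θg = 0) (hconv : ConvexOn ℝ Set.univ g)
    (q C₂ : ℝ) (hq : 1 ≤ q) (hC₂ : 0 < C₂)
    (x y : ℝ) (hyx : y < x) (hθy : θg ≤ y)
    (hnd : ∀ u ∈ Set.Icc θg x, ∀ v ∈ Set.Icc θg x,
      C₂ * |u - v| ^ q ≤ |deriv g u - deriv g v|) :
    C₂ / (q + 1) * |x - y| ^ (q + 1) ≤ |g x - g y| := by
  have hq0 : (0:ℝ) ≤ q := le_trans zero_le_one hq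
  have hgdiff : Differentiable ℝ g := hg.differentiable (by norm_num)
  have hderiv_cont : Continuous (deriv g) := hg.continuous_deriv (by norm_num)
  have hmono : MonotoneOn (deriv g) Set.univ :=
    hconv.monotoneOn_deriv (fun t _ => hgdiff t)
  -- deriv g t ≥ 0 for t ≥ θg
  have hpos : ∀ t ∈ Set.Icc y x, C₂ * (t - y) ^ q ≤ deriv g t := by
    intro t ht
    have htθ : θg ≤ t := le_trans hθy ht.1
    have h0 : (0:ℝ) ≤ deriv g t := by
      have := hmono (Set.mem_univ θg) (Set.mem_univ t) htθ
      rwa [hθ] at this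
    have hndt := hnd t ⟨htθ, ht.2⟩ θg ⟨le_rfl, le_trans hθy (le_of_lt hyx)⟩
    rw [hθ, sub_zero, abs_of_nonneg h0] at hndt
    refine le_trans ?_ hndt
    have h1 : (t - y) ^ q ≤ |t - θg| ^ q := by
      rw [abs_of_nonneg (by linarith [ht.1])]
      exact Real.rpow_le_rpow (by linarith [ht.1]) (by linarith [ht.1]) hq0
    nlinarith [Real.rpow_nonneg (show (0:ℝ) ≤ t - y by linarith [ht.1]) q]
  -- FTC
  have hftc : g x - g y = ∫ t in y..x, deriv g t := by
    rw [intervalIntegral.integral_deriv_eq_sub (fun t _ => hgdiff t)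
      (hderiv_cont.intervalIntegrable y x)]
  have hint : (∫ t in y..x, C₂ * (t - y) ^ q) = C₂ / (q + 1) * (x - y) ^ (q + 1) := by
    rw [intervalIntegral.integral_const_mul]
    have hcomp : (∫ t in y..x, (t - y) ^ q) = ∫ t in (0:ℝ)..(x - y), t ^ q := by
      simpa using intervalIntegral.integral_comp_sub_right (fun t => t ^ q) y (a := y) (b := x)
    rw [hcomp, integral_rpow (Or.inl (by linarith))]
    rw [Real.zero_rpow (by positivity)]
    ring
  have hcont2 : Continuous fun t : ℝ => C₂ * (t - y) ^ q := by
    apply continuous_const.mul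
    rw [continuous_iff_continuousAt]
    intro t
    exact (Real.continuousAt_rpow_const _ _ (Or.inr hq0)).comp
      (continuousAt_id.sub continuousAt_const)
  have hle : (∫ t in y..x, C₂ * (t - y) ^ q) ≤ ∫ t in y..x, deriv g t := by
    apply intervalIntegral.integral_mono_on (le_of_lt hyx)
      (hcont2.intervalIntegrable y x) (hderiv_cont.intervalIntegrable y x)
    exact hpos
  rw [abs_of_nonneg (show (0:ℝ) ≤ x - y by linarith)]
  calc C₂ / (q + 1) * (x - y) ^ (q + 1) = ∫ t in y..x, C₂ * (t - y) ^ q := hint.symm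
    _ ≤ ∫ t in y..x, deriv g t := hle
    _ = g x - g y := hftc.symm
    _ ≤ |g x - g y| := le_abs_self _
end

section
/- Let f, g : ℝ → ℝ be C¹ strictly convex with critical points θ_f, θ_g, f(θ_f) < g(θ_g), and suppose g is C² and satisfies |g'(u) - g'(v)| ≥ C₂|u - v|^q on compacts (q ≥ 1, C₂ > 0). Then on any compact set K the map x ↦ g₋⁻¹(f(x)) is Hölder continuous with exponent 1/(q+1): there exists C > 0 such that |g₋⁻¹(f(x)) - g₋⁻¹(f(y))| ≤ C |x - y|^{1/(q+1)} for all x, y ∈ K with f(x), f(y) ≥ g(θ_g). -/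
/-- Hölder continuity of the singular map `x ↦ g₋⁻¹(f(x))` with
exponent `1/(q+1)` on any compact set `K`, where `g₋⁻¹` is the inverse of `g`
restricted to `(-∞, θg]` and `g` satisfies the non-degeneracy condition
`|g'(u) - g'(v)| ≥ C₂|u - v|^q` on compacts. -/
theorem singular_map_holder
    (f g : ℝ → ℝ) (hf : ContDiff ℝ 1 f) (hg : ContDiff ℝ 2 g)
    (hfconv : StrictConvexOn ℝ Set.univ f) (hgconv : StrictConvexOn ℝ Set.univ g)
    (θf θg : ℝ) (hθf : deriv f θf = 0) (hθg : deriv g θg = 0)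
    (hmin : f θf < g θg)
    (q : ℝ) (hq : 1 ≤ q)
    (hnd : ∀ K' : Set ℝ, IsCompact K' → ∃ C₂ > 0, ∀ u ∈ K', ∀ v ∈ K',
      C₂ * |u - v| ^ q ≤ |deriv g u - deriv g v|)
    (ginv : ℝ → ℝ)
    (hginv_left : ∀ z, z ≤ θg → ginv (g z) = z)
    (hginv_right : ∀ w, g θg ≤ w → ginv w ≤ θg ∧ g (ginv w) = w)
    (K : Set ℝ) (hK : IsCompact K) :
    ∃ C > 0, ∀ x ∈ K, ∀ y ∈ K, g θg ≤ f x → g θg ≤ f y →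
      |ginv (f x) - ginv (f y)| ≤ C * |x - y| ^ (1 / (q + 1)) := by
  classical
  -- trivial case: K empty
  rcases K.eq_empty_or_nonempty with rfl | hne
  · exact ⟨1, one_pos, fun x hx => absurd hx (Set.notMem_empty x)⟩
  have hq1 : (0:ℝ) < q + 1 := by linarith
  have hgd : Differentiable ℝ g := hg.differentiable (by norm_num)
  have hfd : Differentiable ℝ f := hf.differentiable (by norm_num)
  have hmono : StrictMonoOn (deriv g) Set.univ :=
    hgconv.strictMonoOn_deriv (fun x _ => hgd x)
  have hderiv_neg : ∀ t, t < θg → deriv g t < 0 := by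
    intro t ht
    have := hmono (Set.mem_univ t) (Set.mem_univ θg) ht
    rwa [hθg] at this
  have hanti : StrictAntiOn g (Set.Iic θg) := by
    refine strictAntiOn_of_deriv_neg (convex_Iic θg) hgd.continuous.continuousOn ?_
    intro t ht
    rw [interior_Iic] at ht
    exact hderiv_neg t ht
  -- bound on f over K
  obtain ⟨z, hzK, hzmax⟩ := hK.exists_isMaxOn hne hf.continuous.continuousOn
  set M : ℝ := f z with hM
  -- lower bound a for ginv values
  set t0 : ℝ := θg - 1 with ht0
  have hs0 : deriv g t0 < 0 := hderiv_neg t0 (by simp only [ht0]; linarith)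
  set N : ℝ := |M| + |g t0| + 1 with hN
  have hNpos : 0 < N := by positivity
  set a : ℝ := t0 - N / (-(deriv g t0)) with ha
  have hat0 : a < t0 := by
    have : 0 < N / (-(deriv g t0)) := div_pos hNpos (by linarith)
    simp only [ha]; linarith
  have haθ : a ≤ θg := by simp only [ht0] at hat0 ⊢; linarith
  have hgaM : M < g a := by
    obtain ⟨c, hc, hceq⟩ := exists_deriv_eq_slope g hat0
      hgd.continuous.continuousOn hgd.differentiableOn
    have hcs : deriv g c < deriv g t0 :=
      hmono (Set.mem_univ c) (Set.mem_univ t0) hc.2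
    have ht0a : t0 - a = N / (-(deriv g t0)) := by simp only [ha]; ring
    have hslope : (g t0 - g a) / (t0 - a) < deriv g t0 := hceq ▸ hcs
    have hpos : 0 < t0 - a := by linarith
    have h2 : g t0 - g a < deriv g t0 * (t0 - a) := by
      rw [div_lt_iff₀ hpos] at hslope; linarith [hslope]
    have hne0 : deriv g t0 ≠ 0 := ne_of_lt hs0
    have h3 : deriv g t0 * (t0 - a) = -N := by
      rw [ht0a]; field_simp
    have h4 : g a > g t0 + N := by linarith [h2, h3.le, h3.ge]
    have := le_abs_self M
    have := neg_abs_le (g t0)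
    simp only [hN] at h4
    linarith
  -- ginv values lie in [a, θg]
  have hginv_mem : ∀ x ∈ K, g θg ≤ f x → a ≤ ginv (f x) ∧ ginv (f x) ≤ θg := by
    intro x hxK hx
    obtain ⟨h1, h2⟩ := hginv_right (f x) hx
    refine ⟨?_, h1⟩
    by_contra hcon
    push_neg at hcon
    have := hanti (Set.mem_Iic.2 h1) (Set.mem_Iic.2 haθ) hcon
    have hfM : f x ≤ M := hzmax hxK
    rw [h2] at this
    linarith
  -- nondegeneracy constant on [a, θg]
  obtain ⟨C₂, hC₂pos, hC₂⟩ := hnd (Set.Icc a θg) isCompact_Icc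
  -- key pointwise estimate
  have key : ∀ u v : ℝ, a ≤ u → u ≤ v → v ≤ θg →
      C₂ * ((v - u) / 2) ^ (q + 1) ≤ g u - g v := by
    intro u v hau huv hv
    rcases eq_or_lt_of_le huv with rfl | hlt
    · have : ((u - u) / 2 : ℝ) ^ (q + 1) = 0 := by
        rw [sub_self, zero_div, Real.zero_rpow (by linarith)]
      rw [this, mul_zero, sub_self]
    · set m : ℝ := (u + v) / 2 with hm
      have hum : u < m := by simp only [hm]; linarith
      have hmv : m < v := by simp only [hm]; linarith
      obtain ⟨c, hc, hceq⟩ := exists_deriv_eq_slope g hum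
        hgd.continuous.continuousOn hgd.differentiableOn
      have hcθ : c < θg := by linarith [hc.2]
      have hgc_neg : deriv g c < 0 := hderiv_neg c hcθ
      have hcI : c ∈ Set.Icc a θg := ⟨by linarith [hc.1], hcθ.le⟩
      have hb := hC₂ c hcI θg ⟨haθ, le_refl θg⟩
      rw [hθg, sub_zero, abs_of_neg hgc_neg] at hb
      have habs : |c - θg| = θg - c := by
        rw [abs_of_neg (by linarith : c - θg < 0)]; ring
      rw [habs] at hb
      have hhalfpos : (0:ℝ) < (v - u) / 2 := by linarith
      have h1 : (v - u) / 2 ≤ θg - c := by linarith [hc.2]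
      have h2 : ((v - u) / 2) ^ q ≤ (θg - c) ^ q :=
        Real.rpow_le_rpow hhalfpos.le h1 (by linarith)
      have h3 : C₂ * ((v - u) / 2) ^ q ≤ -deriv g c :=
        le_trans (mul_le_mul_of_nonneg_left h2 hC₂pos.le) hb
      have hmu : m - u = (v - u) / 2 := by simp only [hm]; ring
      have hmune : m - u ≠ 0 := ne_of_gt (by linarith : (0:ℝ) < m - u)
      have hgm : g m - g u = deriv g c * (m - u) := by
        rw [hceq]; field_simp
      have hgmv : g v < g m :=
        hanti (Set.mem_Iic.2 (by linarith : m ≤ θg)) (Set.mem_Iic.2 hv) hmv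
      have hstep : C₂ * ((v - u) / 2) ^ q * ((v - u) / 2) ≤
          (-deriv g c) * ((v - u) / 2) :=
        mul_le_mul_of_nonneg_right h3 hhalfpos.le
      have hrw : ((v - u) / 2 : ℝ) ^ (q + 1) = ((v - u) / 2) ^ q * ((v - u) / 2) := by
        rw [Real.rpow_add_one (ne_of_gt hhalfpos)]
      rw [hrw, ← mul_assoc]
      rw [hmu] at hgm
      linarith
  -- Lipschitz bound for f on K
  obtain ⟨b1, hb1K, hb1⟩ := hK.exists_isMinOn hne continuousOn_id
  obtain ⟨b2, hb2K, hb2⟩ := hK.exists_isMaxOn hne continuousOn_id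
  have hKsub : K ⊆ Set.Icc b1 b2 := fun t ht => ⟨hb1 ht, hb2 ht⟩
  have hIccne : (Set.Icc b1 b2).Nonempty := ⟨b1, le_refl b1, hb1 hb2K⟩
  have hdfcont : Continuous (deriv f) := hf.continuous_deriv le_rfl
  obtain ⟨w0, _, hw0⟩ := isCompact_Icc.exists_isMaxOn hIccne
    ((continuous_abs.comp hdfcont).continuousOn)
  set L : ℝ := |deriv f w0| with hL
  have hLnn : 0 ≤ L := abs_nonneg _
  have hLip : ∀ x ∈ K, ∀ y ∈ K, |f x - f y| ≤ (L + 1) * |x - y| := by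
    intro x hx y hy
    have := Convex.norm_image_sub_le_of_norm_deriv_le
      (f := f) (s := Set.Icc b1 b2) (C := L)
      (fun t _ => hfd t) (fun t ht => hw0 ht) (convex_Icc b1 b2)
      (hKsub hy) (hKsub hx)
    rw [Real.norm_eq_abs, Real.norm_eq_abs] at this
    have h2 : L * |x - y| ≤ (L + 1) * |x - y| :=
      mul_le_mul_of_nonneg_right (by linarith) (abs_nonneg _)
    linarith
  -- assemble constants
  set P : ℝ := (2:ℝ) ^ (q + 1) with hP
  have hPpos : 0 < P := Real.rpow_pos_of_pos two_pos _
  set D : ℝ := P * (L + 1) / C₂ with hD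
  have hDpos : 0 < D := by positivity
  refine ⟨D ^ (1 / (q + 1)), Real.rpow_pos_of_pos hDpos _, ?_⟩
  intro x hxK y hyK hx hy
  set u : ℝ := ginv (f x) with hu
  set v : ℝ := ginv (f y) with hv
  obtain ⟨hau, huθ⟩ := hginv_mem x hxK hx
  obtain ⟨hav, hvθ⟩ := hginv_mem y hyK hy
  have hgu : g u = f x := (hginv_right (f x) hx).2
  have hgv : g v = f y := (hginv_right (f y) hy).2
  -- symmetric key estimate
  have hkey2 : C₂ * (|u - v| / 2) ^ (q + 1) ≤ |f x - f y| := by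
    rcases le_total u v with h | h
    · have hk := key u v hau h hvθ
      have hnn : 0 ≤ C₂ * ((v - u) / 2) ^ (q + 1) :=
        mul_nonneg hC₂pos.le (Real.rpow_nonneg (by linarith) _)
      have habs : |u - v| = v - u := by
        rw [abs_sub_comm, abs_of_nonneg (by linarith)]
      have habs2 : |f x - f y| = g u - g v := by
        rw [← hgu, ← hgv, abs_of_nonneg (by linarith)]
      rw [habs, habs2]; exact hk
    · have hk := key v u hav h huθ
      have hnn : 0 ≤ C₂ * ((u - v) / 2) ^ (q + 1) :=
        mul_nonneg hC₂pos.le (Real.rpow_nonneg (by linarith) _)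
      have habs : |u - v| = u - v := abs_of_nonneg (by linarith)
      have habs2 : |f x - f y| = g v - g u := by
        rw [← hgu, ← hgv, abs_sub_comm, abs_of_nonneg (by linarith)]
      rw [habs, habs2]; exact hk
  -- convert to the main inequality
  have hdiv : (|u - v| / 2 : ℝ) ^ (q + 1) = |u - v| ^ (q + 1) / P := by
    rw [hP, Real.div_rpow (abs_nonneg _) (by norm_num : (0:ℝ) ≤ 2)]
  have hfxy : |f x - f y| ≤ (L + 1) * |x - y| := hLip x hxK y hyK
  have hA : |u - v| ^ (q + 1) ≤ D * |x - y| := by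
    have h1 : C₂ * (|u - v| ^ (q + 1) / P) ≤ (L + 1) * |x - y| := by
      rw [← hdiv]; linarith
    have h3 : C₂ * (|u - v| ^ (q + 1) / P) * P ≤ (L + 1) * |x - y| * P :=
      mul_le_mul_of_nonneg_right h1 hPpos.le
    have h4 : C₂ * (|u - v| ^ (q + 1) / P) * P = |u - v| ^ (q + 1) * C₂ := by
      field_simp
    have h6 : |u - v| ^ (q + 1) ≤ P * (L + 1) * |x - y| / C₂ := by
      rw [le_div_iff₀ hC₂pos]
      have h5 : (L + 1) * |x - y| * P = P * (L + 1) * |x - y| := by ring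
      linarith
    have h7 : P * (L + 1) * |x - y| / C₂ = D * |x - y| := by
      rw [hD]; ring
    linarith
  have hexp : (q + 1) * (1 / (q + 1)) = 1 := by field_simp
  have h1 : |u - v| = (|u - v| ^ (q + 1)) ^ (1 / (q + 1)) := by
    rw [← Real.rpow_mul (abs_nonneg _), hexp, Real.rpow_one]
  have h2 : (|u - v| ^ (q + 1)) ^ (1 / (q + 1)) ≤ (D * |x - y|) ^ (1 / (q + 1)) :=
    Real.rpow_le_rpow (Real.rpow_nonneg (abs_nonneg _) _) hA (by positivity)
  have h3 : (D * |x - y|) ^ (1 / (q + 1)) =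
      D ^ (1 / (q + 1)) * |x - y| ^ (1 / (q + 1)) :=
    Real.mul_rpow hDpos.le (abs_nonneg _)
  calc |u - v| = (|u - v| ^ (q + 1)) ^ (1 / (q + 1)) := h1
    _ ≤ (D * |x - y|) ^ (1 / (q + 1)) := h2
    _ = D ^ (1 / (q + 1)) * |x - y| ^ (1 / (q + 1)) := h3
end

section
/- Let 0 < a < b and let z : [a, b] → (-∞, 0] be non-increasing with |z(b)| ≤ K·b for some K > 0. Let H, q > 0 and suppose w : [a,b] → ℝ satisfies |w(t₁) - w(t₂)|^q ≤ H(|z(t₁)| |1/t₁ - 1/t₂| + |z(t₁) - z(t₂)|/t₂) for all a ≤ t₁ < t₂ ≤ b. Then for any partition a ≤ t₁ < t₂ < ⋯ < t_m ≤ b, Σ_{j=1}^{m-1} |w(t_j) - w(t_{j+1})|^q ≤ 2HK·b/a, i.e. TV^{1/q}(w, [a,b]) ≤ 2HK·b/a. -/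
private lemma fin_telescope {m : ℕ} (G : Fin (m + 1) → ℝ) :
    ∑ j : Fin m, (G j.castSucc - G j.succ) = G 0 - G (Fin.last m) := by
  induction m with
  | zero => simp
  | succ n ih =>
    rw [Fin.sum_univ_castSucc]
    have h := ih (fun i => G i.castSucc)
    simp only [Fin.succ_castSucc] at h ⊢
    rw [h]
    simp [Fin.succ_last]

/-- Fractional BV estimate for traces. If `z : [a,b] → (-∞,0]` is
non-increasing with `|z(b)| ≤ K·b`, and `w` satisfies the modulus estimate
`|w(t₁) - w(t₂)|^q ≤ H(|z(t₁)||1/t₁ - 1/t₂| + |z(t₁) - z(t₂)|/t₂)`, then for any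
partition of `[a,b]` the `q`-power variation sum of `w` is at most `2HK·b/a`. -/
theorem trace_fractional_BV_estimate
    (a b : ℝ) (ha : 0 < a) (hab : a < b)
    (z : ℝ → ℝ) (hz_nonpos : ∀ t ∈ Set.Icc a b, z t ≤ 0)
    (hz_anti : ∀ t₁ ∈ Set.Icc a b, ∀ t₂ ∈ Set.Icc a b, t₁ ≤ t₂ → z t₂ ≤ z t₁)
    (K : ℝ) (hK : 0 < K) (hzb : |z b| ≤ K * b)
    (H q : ℝ) (hH : 0 < H) (hq : 0 < q)
    (w : ℝ → ℝ)
    (hw : ∀ t₁ ∈ Set.Icc a b, ∀ t₂ ∈ Set.Icc a b, t₁ < t₂ →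
      |w t₁ - w t₂| ^ q ≤
        H * (|z t₁| * |1 / t₁ - 1 / t₂| + |z t₁ - z t₂| / t₂))
    (m : ℕ) (t : Fin (m + 1) → ℝ) (ht : StrictMono t)
    (htI : ∀ j, t j ∈ Set.Icc a b) :
    ∑ j : Fin m, |w (t j.castSucc) - w (t j.succ)| ^ q ≤ 2 * H * K * b / a := by
  have htpos : ∀ j, 0 < t j := fun j => lt_of_lt_of_le ha (htI j).1
  have hzK : ∀ j, -z (t j) ≤ K * b := by
    intro j
    have h1 : z b ≤ z (t j) :=
      hz_anti (t j) (htI j) b ⟨le_of_lt hab, le_refl b⟩ (htI j).2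
    have h2 : -z b ≤ K * b := by
      rwa [abs_of_nonpos (hz_nonpos b ⟨le_of_lt hab, le_refl b⟩)] at hzb
    linarith
  set G : Fin (m + 1) → ℝ := fun i => H * K * b * (1 / t i) + (H / a) * z (t i) with hG
  have key : ∀ j : Fin m, |w (t j.castSucc) - w (t j.succ)| ^ q ≤ G j.castSucc - G j.succ := by
    intro j
    have hlt : t j.castSucc < t j.succ := ht (Fin.castSucc_lt_succ : j.castSucc < j.succ)
    have h1 := hw _ (htI j.castSucc) _ (htI j.succ) hlt
    have hp1 := htpos j.castSucc
    have hp2 := htpos j.succ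
    have hinv : (1:ℝ) / t j.succ ≤ 1 / t j.castSucc :=
      one_div_le_one_div_of_le hp1 (le_of_lt hlt)
    have hzanti : z (t j.succ) ≤ z (t j.castSucc) :=
      hz_anti _ (htI j.castSucc) _ (htI j.succ) (le_of_lt hlt)
    have e1 : |z (t j.castSucc)| = -z (t j.castSucc) :=
      abs_of_nonpos (hz_nonpos _ (htI j.castSucc))
    have e2 : |1 / t j.castSucc - 1 / t j.succ| = 1 / t j.castSucc - 1 / t j.succ :=
      abs_of_nonneg (by linarith)
    have e3 : |z (t j.castSucc) - z (t j.succ)| = z (t j.castSucc) - z (t j.succ) :=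
      abs_of_nonneg (by linarith)
    rw [e1, e2, e3] at h1
    refine le_trans h1 ?_
    have hb1 : (-z (t j.castSucc)) * (1 / t j.castSucc - 1 / t j.succ)
        ≤ K * b * (1 / t j.castSucc - 1 / t j.succ) := by
      apply mul_le_mul_of_nonneg_right (hzK j.castSucc) (by linarith)
    have hb2 : (z (t j.castSucc) - z (t j.succ)) / t j.succ
        ≤ (z (t j.castSucc) - z (t j.succ)) / a := by
      apply div_le_div_of_nonneg_left (by linarith) ha (htI j.succ).1
    have : H * ((-z (t j.castSucc)) * (1 / t j.castSucc - 1 / t j.succ)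
        + (z (t j.castSucc) - z (t j.succ)) / t j.succ)
        ≤ H * (K * b * (1 / t j.castSucc - 1 / t j.succ)
        + (z (t j.castSucc) - z (t j.succ)) / a) := by
      apply mul_le_mul_of_nonneg_left (by linarith) (le_of_lt hH)
    refine le_trans this (le_of_eq ?_)
    simp only [hG]
    field_simp
    ring
  have hsum : ∑ j : Fin m, |w (t j.castSucc) - w (t j.succ)| ^ q
      ≤ ∑ j : Fin m, (G j.castSucc - G j.succ) :=
    Finset.sum_le_sum fun j _ => key j
  rw [fin_telescope G] at hsum
  refine le_trans hsum ?_
  simp only [hG]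
  have h0 : (1:ℝ) / t 0 ≤ 1 / a := one_div_le_one_div_of_le ha (htI 0).1
  have hl : (0:ℝ) < 1 / t (Fin.last m) := one_div_pos.mpr (htpos _)
  have hz0 : z (t 0) ≤ 0 := hz_nonpos _ (htI 0)
  have hzl : -z (t (Fin.last m)) ≤ K * b := hzK (Fin.last m)
  have hHK : 0 < H * K * b := mul_pos (mul_pos hH hK) (ha.trans hab)
  have step1 : H * K * b * (1 / t 0) - H * K * b * (1 / t (Fin.last m)) ≤ H * K * b / a := by
    have hA : H * K * b * (1 / t 0) ≤ H * K * b * (1 / a) :=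
      mul_le_mul_of_nonneg_left h0 (le_of_lt hHK)
    have hB : 0 ≤ H * K * b * (1 / t (Fin.last m)) := mul_nonneg hHK.le hl.le
    have hE : H * K * b * (1 / a) = H * K * b / a := mul_one_div _ _
    linarith
  have step2 : (H / a) * z (t 0) - (H / a) * z (t (Fin.last m)) ≤ H * K * b / a := by
    have hHa : 0 < H / a := by positivity
    have h1 : (H / a) * z (t 0) ≤ 0 := mul_nonpos_of_nonneg_of_nonpos (le_of_lt hHa) hz0
    have h2 : (H / a) * (-z (t (Fin.last m))) ≤ (H / a) * (K * b) :=
      mul_le_mul_of_nonneg_left hzl (le_of_lt hHa)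
    have : (H / a) * (K * b) = H * K * b / a := by ring
    nlinarith
  have : 2 * H * K * b / a = H * K * b / a + H * K * b / a := by ring
  rw [this]
  linarith
end
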